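/- arXiv:2504.07852 — 5 statements merged into one kernel-verified Lean document; each statement's English description precedes it below -/
import Mathlib

section
/- If G is an n-vertex K_{r+1}-free simple graph (r ≥ 1), then its signless Laplacian spectral radius satisfies q(G) ≤ 2(1 − 1/r)·n. -/
open SimpleGraph Finset Matrix

set_option maxHeartbeats 1000000

/-- The signless Laplacian matrix `Q(G) = D(G) + A(G)` of a simple graph, over `ℝ`. -/
def signlessLaplacian {V : Type*} [Fintype V] [DecidableEq V]
    (G : SimpleGraph V) [DecidableRel G.Adj] : Matrix V V ℝ :=
  Matrix.diagonal (fun v => (G.degree v : ℝ)) + G.adjMatrix ℝ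

lemma exists_eigvec {V : Type*} [Fintype V] [DecidableEq V]
    (M : Matrix V V ℝ) (q : ℝ) (h : q ∈ spectrum ℝ M) :
    ∃ x : V → ℝ, x ≠ 0 ∧ M.mulVec x = q • x := by
  rw [spectrum.mem_iff, Matrix.isUnit_iff_isUnit_det, isUnit_iff_ne_zero, not_not] at h
  obtain ⟨x, hx0, hx⟩ := Matrix.exists_mulVec_eq_zero_iff.2 h
  refine ⟨x, hx0, ?_⟩
  have halg : (algebraMap ℝ (Matrix V V ℝ) q) = q • (1 : Matrix V V ℝ) := by
    rw [Algebra.algebraMap_eq_smul_one]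
  rw [halg, Matrix.sub_mulVec, Matrix.smul_mulVec, Matrix.one_mulVec, sub_eq_zero] at hx
  exact hx.symm

/-- Key combinatorial induction: Wilf-style greedy clique argument for the
signless Laplacian. -/
lemma key_induction {V : Type*} [Fintype V] [DecidableEq V]
    (G : SimpleGraph V) [DecidableRel G.Adj] (q : ℝ) (y : V → ℝ)
    (hy : ∀ v, 0 ≤ y v)
    (heig : ∀ v, q * y v ≤ (G.degree v : ℝ) * y v + ∑ u ∈ G.neighborFinset v, y u)
    (hqn : (Fintype.card V : ℝ) < q) :
    ∀ m : ℕ, ∀ S : Finset V,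
      (∀ K : Finset V, K ⊆ S → G.IsClique (K : Set V) → K.card ≤ m) →
      (∑ v ∈ S, y v) * ((q - (Fintype.card V : ℝ)) * m + 2 * S.card) ≤
        (m : ℝ) * S.card * (∑ v, y v) := by
  intro m
  induction m with
  | zero =>
    intro S hS
    have hSemp : S = ∅ := by
      by_contra hne
      obtain ⟨v, hv⟩ := Finset.nonempty_iff_ne_empty.2 hne
      have h1 := hS {v} (Finset.singleton_subset_iff.2 hv) (by
        rw [Finset.coe_singleton]
        exact Set.pairwise_singleton _ _)
      simp at h1
    subst hSemp
    simp
  | succ m ih =>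
    intro S hS
    rcases S.eq_empty_or_nonempty with rfl | hSne
    · simp
    obtain ⟨v, hvS, hvmax⟩ := S.exists_max_image y hSne
    classical
    set S' : Finset V := S.filter (fun u => G.Adj v u) with hS'def
    have hS'sub : S' ⊆ S := Finset.filter_subset _ _
    set A : Finset V := S \ S' with hAdef
    have hvA : v ∈ A := by
      rw [hAdef, Finset.mem_sdiff]
      refine ⟨hvS, ?_⟩
      rw [hS'def, Finset.mem_filter]
      rintro ⟨-, hadj⟩
      exact G.irrefl hadj
    -- real abbreviations
    set n : ℝ := (Fintype.card V : ℝ) with hndef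
    set s : ℝ := ∑ u, y u with hsdef
    set β : ℝ := q - n with hβdef
    have hβ : 0 < β := by rw [hβdef]; linarith
    set t : ℝ := (S.card : ℝ) with htdef
    set a : ℝ := (A.card : ℝ) with hadef2
    set u : ℝ := (S'.card : ℝ) with hudef
    set c : ℝ := ∑ w ∈ A, y w with hcdef
    set y' : ℝ := ∑ w ∈ S', y w with hy'def
    set M : ℝ := y v with hMdef
    clear_value n s β t a u c y' M
    have hta : t = a + u := by
      rw [htdef, hadef2, hudef, hAdef]
      rw [← Finset.card_sdiff_add_card_eq_card hS'sub]
      push_cast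
      ring
    have ha1 : (1:ℝ) ≤ a := by
      rw [hadef2]
      have : 1 ≤ A.card := Finset.card_pos.2 ⟨v, hvA⟩
      exact_mod_cast this
    have ha0 : 0 < a := by linarith
    have hu0 : 0 ≤ u := by rw [hudef]; positivity
    have hc0 : 0 ≤ c := by
      rw [hcdef]; exact Finset.sum_nonneg fun w _ => hy w
    have hy'0 : 0 ≤ y' := by
      rw [hy'def]; exact Finset.sum_nonneg fun w _ => hy w
    have hs0 : 0 ≤ s := by
      rw [hsdef]; exact Finset.sum_nonneg fun w _ => hy w
    have hM0 : 0 ≤ M := by rw [hMdef]; exact hy v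
    -- c ≤ a * M
    have hcM : c ≤ a * M := by
      rw [hcdef, hadef2]
      have h := Finset.sum_le_card_nsmul A y M (fun w hw => by
        rw [hAdef] at hw
        exact hvmax w (Finset.mem_sdiff.1 hw).1)
      rw [nsmul_eq_mul] at h
      exact h
    -- A and neighborFinset v are disjoint; neighborFinset ⊆ univ \ A
    have hAnbr : ∀ w ∈ A, w ∉ G.neighborFinset v := by
      intro w hw hnb
      rw [SimpleGraph.mem_neighborFinset] at hnb
      rw [hAdef, Finset.mem_sdiff] at hw
      exact hw.2 (by rw [hS'def, Finset.mem_filter]; exact ⟨hw.1, hnb⟩)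
    clear_value S' A
    have hnbrsub : G.neighborFinset v ⊆ Finset.univ \ A := by
      intro w hw
      rw [Finset.mem_sdiff]
      exact ⟨Finset.mem_univ _, fun hwA => hAnbr w hwA hw⟩
    -- degree bound
    have hdeg : (G.degree v : ℝ) ≤ n - a := by
      have hcard : G.degree v ≤ Fintype.card V - A.card := by
        rw [← SimpleGraph.card_neighborFinset_eq_degree]
        calc (G.neighborFinset v).card ≤ (Finset.univ \ A).card :=
              Finset.card_le_card hnbrsub
          _ = Fintype.card V - A.card := by
              rw [Finset.card_sdiff_of_subset (Finset.subset_univ A), Finset.card_univ]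
      have hAle : A.card ≤ Fintype.card V := Finset.card_le_univ A
      rw [hndef, hadef2]
      have := Nat.cast_le (α := ℝ) |>.2 hcard
      rwa [Nat.cast_sub hAle] at this
    -- neighbor sum bound
    have hNsum : ∑ w ∈ G.neighborFinset v, y w ≤ s - c := by
      have h1 : ∑ w ∈ G.neighborFinset v, y w ≤ ∑ w ∈ Finset.univ \ A, y w :=
        Finset.sum_le_sum_of_subset_of_nonneg hnbrsub (fun w _ _ => hy w)
      have h2 : ∑ w ∈ Finset.univ \ A, y w = s - c := by
        rw [hsdef, hcdef, eq_sub_iff_add_eq, Finset.sum_sdiff (Finset.subset_univ A)]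
      linarith
    -- eigen inequality at v gives (β + a) * M ≤ s - c
    have hstep : (β + a) * M ≤ s - c := by
      have h := heig v
      have hdm : (G.degree v : ℝ) * M ≤ (n - a) * M :=
        mul_le_mul_of_nonneg_right hdeg hM0
      rw [← hMdef] at h
      nlinarith [h, hdm, hNsum]
    -- the chunk inequality
    have h1 : c * (β + 2 * a) ≤ a * s := by
      have e1 : c * (β + a) ≤ a * M * (β + a) :=
        mul_le_mul_of_nonneg_right hcM (by linarith)
      have e2 : a * M * (β + a) ≤ a * (s - c) := by
        calc a * M * (β + a) = a * ((β + a) * M) := by ring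
          _ ≤ a * (s - c) := mul_le_mul_of_nonneg_left hstep (by linarith)
      nlinarith [e1, e2]
    -- cliques in S' have size ≤ m
    have hS'cl : ∀ K : Finset V, K ⊆ S' → G.IsClique (K : Set V) → K.card ≤ m := by
      intro K hKsub hKcl
      rw [hS'def] at hKsub
      have hvK : v ∉ K := by
        intro hvK
        have := (Finset.mem_filter.1 (hKsub hvK)).2
        exact G.irrefl this
      have hins : G.IsClique ((insert v K : Finset V) : Set V) := by
        rw [Finset.coe_insert]
        refine hKcl.insert ?_
        intro b hb _
        exact (Finset.mem_filter.1 (hKsub hb)).2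
      have hsub2 : insert v K ⊆ S := by
        intro w hw
        rcases Finset.mem_insert.1 hw with rfl | hwK
        · exact hvS
        · exact hS'sub (by rw [hS'def]; exact hKsub hwK)
      have := hS (insert v K) hsub2 hins
      rw [Finset.card_insert_of_notMem hvK] at this
      omega
    -- induction hypothesis
    have h2 := ih S' hS'cl
    rw [← hy'def, ← hudef] at h2
    -- split sum over S
    have hsplit : ∑ w ∈ S, y w = c + y' := by
      rw [hcdef, hy'def, hAdef, Finset.sum_sdiff_eq_sub hS'sub]
      ring
    rw [hsplit]
    -- goal : (c + y') * (β * (m+1) + 2 * t) ≤ (m+1) * t * s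
    push_cast
    rcases Nat.eq_zero_or_pos m with rfl | hm1
    · -- m = 0 case
      simp only [Nat.cast_zero] at h2 ⊢
      have hy'u : y' * u = 0 := by
        rcases eq_or_lt_of_le hu0 with hu' | hu'
        · rw [← hu']; ring
        · have : y' ≤ 0 := by nlinarith [h2]
          have : y' = 0 := le_antisymm this hy'0
          rw [this]; ring
      have hy'0' : y' = 0 := by
        rcases eq_or_lt_of_le hu0 with hu' | hu'
        · have hS'emp : S' = ∅ := by
            rw [← Finset.card_eq_zero]
            have : (S'.card : ℝ) = 0 := by rw [← hudef, ← hu']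
            exact_mod_cast this
          rw [hy'def, hS'emp, Finset.sum_empty]
        · rcases mul_eq_zero.1 hy'u with h | h
          · exact h
          · exact absurd h (by linarith)
      rw [hy'0']
      have h2c : 2 * c ≤ s := by
        have : 2 * c * a ≤ s * a := by nlinarith [h1, mul_nonneg hc0 hβ.le]
        exact le_of_mul_le_mul_right this ha0
      have : c * (β * (0 + 1) + 2 * t) = c * (β + 2 * a) + 2 * c * u := by
        rw [hta]; ring
      rw [hta]
      nlinarith [mul_le_mul_of_nonneg_right h2c hu0]
    · -- m ≥ 1 case
      have hm1' : (1:ℝ) ≤ (m:ℝ) := by exact_mod_cast hm1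
      set D0 : ℝ := β + 2 * a with hD0def
      set D1 : ℝ := β * m + 2 * u with hD1def
      have h2' : y' * D1 ≤ (m : ℝ) * u * s := h2
      have h1' : c * D0 ≤ a * s := h1
      clear_value D0 D1
      have hD0 : 0 < D0 := by rw [hD0def]; linarith
      have hD1 : 0 < D1 := by rw [hD1def]; nlinarith
      -- key algebraic identity
      have keyid : a * D1 ^ 2 + (m : ℝ) * u * D0 ^ 2 + 2 * β * ((m : ℝ) * a - u) ^ 2
          = ((m : ℝ) * a + u) * (D0 * D1) := by
        rw [hD0def, hD1def]; ring
      have e1 : (c * D0) * (D0 * D1 + D1 ^ 2) ≤ (a * s) * (D0 * D1 + D1 ^ 2) :=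
        mul_le_mul_of_nonneg_right h1' (by positivity)
      have e2 : (y' * D1) * (D0 * D1 + D0 ^ 2) ≤ ((m : ℝ) * u * s) * (D0 * D1 + D0 ^ 2) :=
        mul_le_mul_of_nonneg_right h2' (by positivity)
      have esum : (c + y') * (D0 + D1) * (D0 * D1)
          = (c * D0) * (D0 * D1 + D1 ^ 2) + (y' * D1) * (D0 * D1 + D0 ^ 2) := by ring
      have emain : (c + y') * (D0 + D1) * (D0 * D1)
          ≤ (((m : ℝ) + 1) * t * s) * (D0 * D1) := by
        calc (c + y') * (D0 + D1) * (D0 * D1)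
            = (c * D0) * (D0 * D1 + D1 ^ 2) + (y' * D1) * (D0 * D1 + D0 ^ 2) := esum
          _ ≤ (a * s) * (D0 * D1 + D1 ^ 2) + ((m : ℝ) * u * s) * (D0 * D1 + D0 ^ 2) := by
              linarith [e1, e2]
          _ = s * ((a + (m : ℝ) * u) * (D0 * D1))
              + s * (a * D1 ^ 2 + (m : ℝ) * u * D0 ^ 2) := by ring
          _ = s * (((a + (m : ℝ) * u) + ((m : ℝ) * a + u)) * (D0 * D1))
              - s * (2 * β * ((m : ℝ) * a - u) ^ 2) := by
              linear_combination s * keyid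
          _ ≤ s * (((a + (m : ℝ) * u) + ((m : ℝ) * a + u)) * (D0 * D1)) := by
              have hsq : 0 ≤ s * (2 * β * ((m : ℝ) * a - u) ^ 2) := by positivity
              linarith
          _ = (((m : ℝ) + 1) * t * s) * (D0 * D1) := by
              rw [show (a + (m : ℝ) * u) + ((m : ℝ) * a + u) = ((m : ℝ) + 1) * (a + u) by ring,
                ← hta]
              ring
      have hfin : (c + y') * (D0 + D1) ≤ ((m : ℝ) + 1) * t * s := by
        have hpos : 0 < D0 * D1 := mul_pos hD0 hD1
        exact le_of_mul_le_mul_right emain hpos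
      have hD01 : D0 + D1 = β * ((m : ℝ) + 1) + 2 * t := by
        rw [hD0def, hD1def, hta]; ring
      rw [hD01] at hfin
      linarith [hfin]

/-- If `G` is `K_{r+1}`-free on `n` vertices, then `q(G) ≤ 2 (1 − 1/r) n`. -/
theorem q_le_of_cliqueFree {V : Type*} [Fintype V] [DecidableEq V]
    (G : SimpleGraph V) [DecidableRel G.Adj] (r : ℕ) (hr : 1 ≤ r)
    (hfree : G.CliqueFree (r + 1)) (q : ℝ)
    (hq : IsGreatest (spectrum ℝ (signlessLaplacian G)) q) :
    q ≤ 2 * (1 - 1 / (r : ℝ)) * (Fintype.card V : ℝ) := by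
  classical
  obtain ⟨x, hx0, hx⟩ := exists_eigvec (signlessLaplacian G) q hq.1
  set y : V → ℝ := fun v => |x v| with hydef
  have hy0 : ∀ v, 0 ≤ y v := fun v => abs_nonneg _
  -- entries of Q are nonnegative
  have hQnn : ∀ v u, 0 ≤ signlessLaplacian G v u := by
    intro v u
    unfold signlessLaplacian
    rw [Matrix.add_apply, Matrix.diagonal_apply, SimpleGraph.adjMatrix_apply]
    have h1 : (0:ℝ) ≤ if v = u then (G.degree v : ℝ) else 0 := by
      split_ifs <;> positivity
    have h2 : (0:ℝ) ≤ if G.Adj v u then (1:ℝ) else 0 := by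
      split_ifs <;> norm_num
    linarith
  -- the eigen-inequality for y = |x|
  have heig : ∀ v, q * y v ≤ (G.degree v : ℝ) * y v + ∑ u ∈ G.neighborFinset v, y u := by
    intro v
    have hqx : q * x v = ∑ u, signlessLaplacian G v u * x u := by
      have h := congrFun hx v
      rw [Pi.smul_apply, smul_eq_mul] at h
      rw [← h]
      rfl
    have hexp : ∑ u, signlessLaplacian G v u * y u
        = (G.degree v : ℝ) * y v + ∑ u ∈ G.neighborFinset v, y u := by
      have hmv : ∑ u, signlessLaplacian G v u * y u = (signlessLaplacian G).mulVec y v := rfl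
      rw [hmv]
      unfold signlessLaplacian
      rw [Matrix.add_mulVec, Pi.add_apply, SimpleGraph.adjMatrix_mulVec_apply,
        Matrix.mulVec_diagonal]
    calc q * y v ≤ |q| * |x v| :=
          mul_le_mul_of_nonneg_right (le_abs_self q) (abs_nonneg _)
      _ = |q * x v| := (abs_mul q (x v)).symm
      _ = |∑ u, signlessLaplacian G v u * x u| := by rw [hqx]
      _ ≤ ∑ u, |signlessLaplacian G v u * x u| := Finset.abs_sum_le_sum_abs _ _
      _ = ∑ u, signlessLaplacian G v u * y u := by
          refine Finset.sum_congr rfl fun u _ => ?_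
          rw [abs_mul, abs_of_nonneg (hQnn v u)]
      _ = (G.degree v : ℝ) * y v + ∑ u ∈ G.neighborFinset v, y u := hexp
  -- a positive coordinate
  obtain ⟨v0, hv0⟩ : ∃ v, 0 < y v := by
    by_contra h
    push_neg at h
    apply hx0
    funext v
    have h1 : y v = 0 := le_antisymm (h v) (hy0 v)
    have h2 : |x v| = 0 := h1
    simpa using abs_eq_zero.1 h2
  have hs : 0 < ∑ v, y v :=
    Finset.sum_pos' (fun i _ => hy0 i) ⟨v0, Finset.mem_univ _, hv0⟩
  rcases eq_or_lt_of_le hr with hr1 | hr2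
  · -- r = 1 : no edges at all, q ≤ 0
    have hnoadj : ∀ v u, ¬ G.Adj v u := by
      intro v u hadj
      have hne : v ≠ u := G.ne_of_adj hadj
      refine hfree {v, u} ?_
      constructor
      · rw [Finset.coe_insert, Finset.coe_singleton]
        intro a ha b hb hab
        rcases ha with rfl | ha <;> rcases hb with rfl | hb
        · exact absurd rfl hab
        · rw [Set.mem_singleton_iff] at hb; subst hb; exact hadj
        · rw [Set.mem_singleton_iff] at ha; subst ha; exact hadj.symm
        · rw [Set.mem_singleton_iff] at ha hb; subst ha; subst hb
          exact absurd rfl hab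
      · rw [Finset.card_insert_of_notMem (by simp [hne]), Finset.card_singleton]
        omega
    have hnb : G.neighborFinset v0 = ∅ := by
      ext u
      simp only [SimpleGraph.mem_neighborFinset, Finset.notMem_empty, iff_false]
      exact hnoadj v0 u
    have hdeg0 : G.degree v0 = 0 := by
      rw [← SimpleGraph.card_neighborFinset_eq_degree, hnb, Finset.card_empty]
    have h := heig v0
    rw [hdeg0, hnb, Finset.sum_empty] at h
    push_cast at h
    have hq0 : q ≤ 0 := by nlinarith [h, hv0]
    have : (r : ℝ) = 1 := by exact_mod_cast hr1.symm
    rw [this]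
    norm_num
    nlinarith [hq0, Nat.cast_nonneg (α := ℝ) (Fintype.card V)]
  · -- 2 ≤ r
    have hr2' : (2:ℝ) ≤ (r:ℝ) := by exact_mod_cast hr2
    have hr0 : (0:ℝ) < (r:ℝ) := by linarith
    have hn0 : (0:ℝ) ≤ (Fintype.card V : ℝ) := Nat.cast_nonneg _
    by_cases hqn : q ≤ (Fintype.card V : ℝ)
    · -- bound is at least n
      have h1r : 1/(r:ℝ) ≤ 1/2 := by
        apply one_div_le_one_div_of_le <;> linarith
      nlinarith [hn0, h1r, hqn]
    · push_neg at hqn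
      have hcl : ∀ K : Finset V, K ⊆ Finset.univ → G.IsClique (K : Set V) → K.card ≤ r := by
        intro K _ hK
        by_contra hgt
        push_neg at hgt
        obtain ⟨K', hK'sub, hK'card⟩ :=
          Finset.exists_subset_card_eq (show r + 1 ≤ K.card by omega)
        exact hfree K' ⟨hK.subset (Finset.coe_subset.2 hK'sub), hK'card⟩
      have hkey := key_induction G q y hy0 heig hqn r Finset.univ hcl
      rw [Finset.card_univ] at hkey
      set n : ℝ := (Fintype.card V : ℝ) with hndef
      set s : ℝ := ∑ v, y v with hsdef
      clear_value n s
      have hcancel : (q - n) * r + 2 * n ≤ (r : ℝ) * n := by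
        have h1 : ((q - n) * r + 2 * n) * s ≤ ((r : ℝ) * n) * s := by
          calc ((q - n) * r + 2 * n) * s = s * ((q - n) * r + 2 * n) := by ring
            _ ≤ (r : ℝ) * n * s := hkey
            _ = ((r : ℝ) * n) * s := by ring
        exact le_of_mul_le_mul_right h1 hs
      have hrw : 2 * (1 - 1 / (r : ℝ)) * n = (2 * (r:ℝ) * n - 2 * n) / (r:ℝ) := by
        field_simp
      rw [hrw, le_div_iff₀ hr0]
      nlinarith [hcancel]
end

section
/- If G is an n-vertex K_{r+1}-free simple graph (r ≥ 1), then its adjacency spectral radius satisfies λ(G) ≤ (1 − 1/r)·n. -/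
open SimpleGraph Finset Matrix
private lemma ms_aux {V : Type*} [Fintype V] [DecidableEq V]
    (G : SimpleGraph V) [DecidableRel G.Adj] (r : ℕ) (hr : 1 ≤ r) :
    ∀ (s : Finset V) (y : V → ℝ), (∀ v, 0 ≤ y v) →
      (∀ t : Finset V, t ⊆ s → ¬ G.IsNClique (r + 1) t) →
      ∑ u ∈ s, y u * ∑ w ∈ G.neighborFinset u ∩ s, y w
        ≤ (1 - 1 / (r : ℝ)) * (∑ u ∈ s, y u) ^ 2 := by
  induction r, hr using Nat.le_induction with
  | base =>
    intro s y hy hcf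
    have : ∀ u ∈ s, y u * ∑ w ∈ G.neighborFinset u ∩ s, y w = 0 := by
      intro u hu
      have : G.neighborFinset u ∩ s = ∅ := by
        rw [Finset.eq_empty_iff_forall_notMem]
        intro w hw
        rw [Finset.mem_inter, SimpleGraph.mem_neighborFinset] at hw
        refine hcf {u, w} ?_ ?_
        · intro x hx
          rw [Finset.mem_insert, Finset.mem_singleton] at hx
          rcases hx with h | h <;> subst h
          · exact hu
          · exact hw.2
        · constructor
          · rw [Finset.coe_insert, Finset.coe_singleton]
            exact SimpleGraph.isClique_pair.2 fun _ => hw.1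
          · rw [Finset.card_insert_of_notMem (by simp [hw.1.ne]), Finset.card_singleton]
      rw [this, Finset.sum_empty, mul_zero]
    rw [Finset.sum_congr rfl this]
    simp
  | succ r hr ih =>
    intro s y hy hcf
    rcases s.eq_empty_or_nonempty with rfl | hs
    · simp
    obtain ⟨v, hv, hvmax⟩ := Finset.exists_max_image s
      (fun u => ∑ w ∈ G.neighborFinset u ∩ s, y w) hs
    set A : Finset V := G.neighborFinset v ∩ s with hA
    have hAs : A ⊆ s := Finset.inter_subset_right
    set a : ℝ := ∑ u ∈ A, y u with ha
    set b : ℝ := ∑ u ∈ s \ A, y u with hb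
    have ha0 : 0 ≤ a := Finset.sum_nonneg fun i _ => hy i
    have hb0 : 0 ≤ b := Finset.sum_nonneg fun i _ => hy i
    have hsum : ∑ u ∈ s, y u = b + a := (Finset.sum_sdiff hAs).symm
    -- clique hypothesis on A
    have hcfA : ∀ t : Finset V, t ⊆ A → ¬ G.IsNClique (r + 1) t := by
      intro t ht hcl
      refine hcf (insert v t) ?_ ?_
      · intro x hx
        rw [Finset.mem_insert] at hx
        rcases hx with rfl | hx
        · exact hv
        · exact hAs (ht hx)
      · exact hcl.insert fun b hb => by
          have := ht hb
          rw [hA, Finset.mem_inter, SimpleGraph.mem_neighborFinset] at this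
          exact this.1
    have hAbound := ih A y hy hcfA
    -- bound for u in A
    have h1 : ∑ u ∈ A, y u * ∑ w ∈ G.neighborFinset u ∩ s, y w
        ≤ (1 - 1 / (r : ℝ)) * a ^ 2 + a * b := by
      have step : ∀ u ∈ A, y u * ∑ w ∈ G.neighborFinset u ∩ s, y w
          ≤ y u * ((∑ w ∈ G.neighborFinset u ∩ A, y w) + b) := by
        intro u hu
        refine mul_le_mul_of_nonneg_left ?_ (hy u)
        have hsplit : G.neighborFinset u ∩ s
            = (G.neighborFinset u ∩ A) ∪ (G.neighborFinset u ∩ (s \ A)) := by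
          rw [← Finset.inter_union_distrib_left, Finset.union_sdiff_of_subset hAs]
        rw [hsplit, Finset.sum_union]
        · gcongr
          exact Finset.sum_le_sum_of_subset_of_nonneg Finset.inter_subset_right
            (fun i _ _ => hy i)
        · exact Finset.disjoint_left.2 fun x hx hx' => (Finset.mem_sdiff.1
            (Finset.mem_inter.1 hx').2).2 (Finset.mem_inter.1 hx).2
      calc ∑ u ∈ A, y u * ∑ w ∈ G.neighborFinset u ∩ s, y w
          ≤ ∑ u ∈ A, y u * ((∑ w ∈ G.neighborFinset u ∩ A, y w) + b) :=
            Finset.sum_le_sum step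
        _ = (∑ u ∈ A, y u * ∑ w ∈ G.neighborFinset u ∩ A, y w) + a * b := by
            simp [mul_add, Finset.sum_add_distrib, ha, Finset.sum_mul]
        _ ≤ (1 - 1 / (r : ℝ)) * a ^ 2 + a * b := by linarith
    -- bound for u in B
    have h2 : ∑ u ∈ s \ A, y u * ∑ w ∈ G.neighborFinset u ∩ s, y w ≤ b * a := by
      rw [hb, Finset.sum_mul]
      refine Finset.sum_le_sum fun u hu => ?_
      refine mul_le_mul_of_nonneg_left ?_ (hy u)
      exact hvmax u (Finset.mem_sdiff.1 hu).1
    have hQ : ∑ u ∈ s, y u * ∑ w ∈ G.neighborFinset u ∩ s, y w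
        ≤ (1 - 1 / (r : ℝ)) * a ^ 2 + a * b + b * a := by
      rw [← Finset.sum_sdiff hAs]; linarith
    rw [hsum]
    have hR : (1 : ℝ) ≤ (r : ℝ) := by exact_mod_cast hr
    have hR0 : (0 : ℝ) < (r : ℝ) := by linarith
    have hR1 : (0 : ℝ) < (r : ℝ) + 1 := by linarith
    have key : (1 - 1 / (r : ℝ)) * a ^ 2 + a * b + b * a
        ≤ (1 - 1 / ((r : ℝ) + 1)) * (b + a) ^ 2 := by
      rw [← sub_nonneg]
      have expand : (1 - 1 / ((r : ℝ) + 1)) * (b + a) ^ 2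
          - ((1 - 1 / (r : ℝ)) * a ^ 2 + a * b + b * a)
          = (a - (r : ℝ) * b) ^ 2 / ((r : ℝ) * ((r : ℝ) + 1)) := by
        field_simp
        ring
      rw [expand]
      positivity
    push_cast
    linarith

/-- Wilf's bound: if `G` is `K_{r+1}`-free on `n` vertices, then `λ(G) ≤ (1 − 1/r) n`. -/
theorem adjSpectralRadius_le_of_cliqueFree {V : Type*} [Fintype V] [DecidableEq V]
    (G : SimpleGraph V) [DecidableRel G.Adj] (r : ℕ) (hr : 1 ≤ r)
    (hfree : G.CliqueFree (r + 1)) (lam : ℝ)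
    (hlam : IsGreatest (spectrum ℝ (G.adjMatrix ℝ)) lam) :
    lam ≤ (1 - 1 / (r : ℝ)) * (Fintype.card V : ℝ) := by
  -- extract an eigenvector
  obtain ⟨x, hx0, hxe⟩ : ∃ x : V → ℝ, x ≠ 0 ∧ (G.adjMatrix ℝ).mulVec x = lam • x := by
    have h1 : lam ∈ spectrum ℝ (Matrix.toLinAlgEquiv' (G.adjMatrix ℝ)) := by
      rw [AlgEquiv.spectrum_eq]; exact hlam.1
    obtain ⟨x, hx⟩ := Module.End.HasEigenvalue.exists_hasEigenvector
      (Module.End.HasEigenvalue.of_mem_spectrum h1)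
    exact ⟨x, hx.2, by simpa [Matrix.toLinAlgEquiv'_apply] using hx.apply_eq_smul⟩
  set S : ℝ := ∑ u, x u ^ 2 with hS
  have hSpos : 0 < S := by
    obtain ⟨u, hu⟩ := Function.ne_iff.1 hx0
    exact Finset.sum_pos' (fun i _ => sq_nonneg _)
      ⟨u, Finset.mem_univ u, by exact pow_pos (abs_pos.2 hu) 2 |>.trans_eq (by rw [sq_abs])⟩
  have eq1 : ∑ u, x u * (G.adjMatrix ℝ).mulVec x u = lam * S := by
    rw [hxe, hS, Finset.mul_sum]
    exact Finset.sum_congr rfl fun u _ => by simp [Pi.smul_apply]; ring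
  have eq2 : ∑ u, x u * (G.adjMatrix ℝ).mulVec x u
      = ∑ u, x u * ∑ w ∈ G.neighborFinset u, x w := by
    exact Finset.sum_congr rfl fun u _ => by rw [adjMatrix_mulVec_apply]
  have habs : ∑ u, x u * ∑ w ∈ G.neighborFinset u, x w
      ≤ ∑ u, |x u| * ∑ w ∈ G.neighborFinset u, |x w| := by
    refine Finset.sum_le_sum fun u _ => ?_
    calc x u * ∑ w ∈ G.neighborFinset u, x w
        ≤ |x u * ∑ w ∈ G.neighborFinset u, x w| := le_abs_self _
      _ = |x u| * |∑ w ∈ G.neighborFinset u, x w| := abs_mul _ _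
      _ ≤ |x u| * ∑ w ∈ G.neighborFinset u, |x w| :=
          mul_le_mul_of_nonneg_left (Finset.abs_sum_le_sum_abs _ _) (abs_nonneg _)
  have hms := ms_aux G r hr Finset.univ (fun u => |x u|) (fun u => abs_nonneg _)
    (fun t _ => hfree t)
  simp only [Finset.inter_univ] at hms
  have hcs : (∑ u, |x u|) ^ 2 ≤ (Fintype.card V : ℝ) * S := by
    have := Finset.sum_mul_sq_le_sq_mul_sq Finset.univ (fun _ => (1 : ℝ)) (fun u => |x u|)
    simpa [hS, Finset.card_univ, sq_abs] using this
  have hfrac : (0 : ℝ) ≤ 1 - 1 / (r : ℝ) := by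
    have : (1 : ℝ) ≤ (r : ℝ) := by exact_mod_cast hr
    have h0 : (0 : ℝ) < (r : ℝ) := by linarith
    rw [sub_nonneg, div_le_one h0]; exact this
  have final : lam * S ≤ ((1 - 1 / (r : ℝ)) * (Fintype.card V : ℝ)) * S := by
    calc lam * S = ∑ u, x u * ∑ w ∈ G.neighborFinset u, x w := by rw [← eq1, eq2]
      _ ≤ ∑ u, |x u| * ∑ w ∈ G.neighborFinset u, |x w| := habs
      _ ≤ (1 - 1 / (r : ℝ)) * (∑ u, |x u|) ^ 2 := hms
      _ ≤ (1 - 1 / (r : ℝ)) * ((Fintype.card V : ℝ) * S) :=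
          mul_le_mul_of_nonneg_left hcs hfrac
      _ = ((1 - 1 / (r : ℝ)) * (Fintype.card V : ℝ)) * S := by ring
  exact le_of_mul_le_mul_right final hSpos
end

section
/- If G is a K_{r+1}-free simple graph on n vertices with m edges (r ≥ 1), then ∑_{v ∈ V(G)} d(v)² ≤ 2(1 − 1/r)·m·n. -/
open SimpleGraph Finset

private lemma sum_over_nbrs {V : Type*} [Fintype V] [DecidableEq V]
    (G : SimpleGraph V) [DecidableRel G.Adj] (s : Finset V) (f : V → ℝ) :
    ∑ u ∈ s, ∑ v ∈ G.neighborFinset u ∩ s, f v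
      = ∑ v ∈ s, ((G.neighborFinset v ∩ s).card : ℝ) * f v := by
  have hset : ∀ u : V, G.neighborFinset u ∩ s = s.filter (fun v => G.Adj u v) := by
    intro u; ext v; simp [and_comm]
  simp_rw [hset, Finset.sum_filter]
  rw [Finset.sum_comm]
  refine Finset.sum_congr rfl fun v hv => ?_
  have hcomm : ∀ u : V, (if G.Adj u v then f v else 0) = if G.Adj v u then f v else 0 := by
    intro u
    by_cases h : G.Adj u v
    · rw [if_pos h, if_pos h.symm]
    · rw [if_neg h, if_neg (fun h' => h h'.symm)]
  simp_rw [hcomm]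
  rw [← Finset.sum_filter, Finset.sum_const, nsmul_eq_mul]

private lemma key_lemma {V : Type*} [Fintype V] [DecidableEq V]
    (G : SimpleGraph V) [DecidableRel G.Adj] :
    ∀ r : ℕ, 1 ≤ r → ∀ s : Finset V,
      (∀ t ⊆ s, ¬ G.IsNClique (r + 1) t) →
      ∑ v ∈ s, ((G.neighborFinset v ∩ s).card : ℝ) ^ 2 ≤
        (1 - 1 / (r : ℝ)) * (∑ v ∈ s, ((G.neighborFinset v ∩ s).card : ℝ)) * s.card := by
  intro r hr
  induction r, hr using Nat.le_induction with
  | base =>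
    intro s h
    have hz : ∀ v ∈ s, G.neighborFinset v ∩ s = ∅ := by
      intro v hv
      by_contra hne
      obtain ⟨w, hw⟩ := Finset.nonempty_iff_ne_empty.2 hne
      rw [Finset.mem_inter, SimpleGraph.mem_neighborFinset] at hw
      have hvw : v ≠ w := G.ne_of_adj hw.1
      have hclique : G.IsNClique 2 {v, w} := by
        constructor
        · intro a ha b hb hab
          simp only [Finset.coe_insert, Finset.coe_singleton, Set.mem_insert_iff,
            Set.mem_singleton_iff] at ha hb
          rcases ha with rfl | rfl <;> rcases hb with rfl | rfl
          · exact absurd rfl hab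
          · exact hw.1
          · exact hw.1.symm
          · exact absurd rfl hab
        · rw [Finset.card_insert_of_notMem (by simp [hvw]), Finset.card_singleton]
      exact h {v, w} (by
        intro x hx
        simp only [Finset.mem_insert, Finset.mem_singleton] at hx
        rcases hx with rfl | rfl
        · exact hv
        · exact hw.2) hclique
    have h1 : ∑ v ∈ s, ((G.neighborFinset v ∩ s).card : ℝ) ^ 2 = 0 := by
      refine Finset.sum_eq_zero fun v hv => ?_
      rw [hz v hv]; simp
    rw [h1]
    norm_num
  | succ r hr ih =>
    intro s h
    -- notation
    set d : V → ℝ := fun v => ((G.neighborFinset v ∩ s).card : ℝ) with hd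
    have hrpos : (0 : ℝ) < r := by exact_mod_cast hr
    -- main per-vertex estimate
    have hmain : ∀ u ∈ s, ∑ v ∈ G.neighborFinset u ∩ s, d v ≤
        d u * s.card - d u ^ 2 / r := by
      intro u hu
      set t : Finset V := G.neighborFinset u ∩ s with htdef
      have hts : t ⊆ s := Finset.inter_subset_right
      -- no (r+1)-clique inside t
      have hclique : ∀ t' ⊆ t, ¬ G.IsNClique (r + 1) t' := by
        intro t' ht' hc
        have hadj : ∀ b ∈ t', G.Adj u b := by
          intro b hb
          have := ht' hb
          rw [htdef, Finset.mem_inter, SimpleGraph.mem_neighborFinset] at this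
          exact this.1
        have hnotmem : u ∉ t' := by
          intro hmem
          exact G.irrefl (hadj u hmem)
        have hc2 : G.IsNClique (r + 2) (insert u t') := hc.insert hadj
        refine h (insert u t') ?_ hc2
        intro x hx
        rw [Finset.mem_insert] at hx
        rcases hx with rfl | hx
        · exact hu
        · exact hts (ht' hx)
      -- IH on t
      have hIH := ih t hclique
      set Dt : ℝ := ∑ v ∈ t, ((G.neighborFinset v ∩ t).card : ℝ) with hDt
      have hCS : Dt ^ 2 ≤ (t.card : ℝ) * ∑ v ∈ t, ((G.neighborFinset v ∩ t).card : ℝ) ^ 2 := by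
        rw [hDt]
        exact sq_sum_le_card_mul_sum_sq (s := t)
          (f := fun v => ((G.neighborFinset v ∩ t).card : ℝ))
      have hDtnn : 0 ≤ Dt := Finset.sum_nonneg fun v _ => by positivity
      have hDtle : Dt ≤ (1 - 1 / (r : ℝ)) * (t.card : ℝ) ^ 2 := by
        rcases eq_or_lt_of_le hDtnn with hD0 | hD0
        · rw [← hD0]
          have : (0:ℝ) ≤ 1 - 1 / (r:ℝ) := by
            rw [sub_nonneg]
            rw [div_le_one hrpos]
            exact_mod_cast hr
          positivity
        · have h2 : Dt ^ 2 ≤ (t.card : ℝ) * ((1 - 1 / (r : ℝ)) * Dt * t.card) :=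
            le_trans hCS (by
              apply mul_le_mul_of_nonneg_left hIH (by positivity))
          have h3 : Dt * Dt ≤ ((1 - 1 / (r : ℝ)) * (t.card : ℝ) ^ 2) * Dt := by
            nlinarith [h2]
          exact le_of_mul_le_mul_right h3 hD0
      -- bound each d v for v ∈ t
      have hsplit : ∀ v ∈ t, d v ≤ ((G.neighborFinset v ∩ t).card : ℝ)
          + ((s.card : ℝ) - (t.card : ℝ)) := by
        intro v hv
        have hcard : (G.neighborFinset v ∩ s).card =
            ((G.neighborFinset v ∩ s) ∩ t).card + ((G.neighborFinset v ∩ s) \ t).card :=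
          (Finset.card_inter_add_card_sdiff _ _).symm
        have h1 : (G.neighborFinset v ∩ s) ∩ t = G.neighborFinset v ∩ t := by
          rw [Finset.inter_assoc, Finset.inter_eq_right.2 hts]
        have h2 : ((G.neighborFinset v ∩ s) \ t).card ≤ (s \ t).card := by
          apply Finset.card_le_card
          exact Finset.sdiff_subset_sdiff Finset.inter_subset_right le_rfl
        have h3 : ((s \ t).card : ℝ) = (s.card : ℝ) - (t.card : ℝ) := by
          rw [Finset.card_sdiff_of_subset hts]
          have := Finset.card_le_card hts
          push_cast [Nat.cast_sub this]
          ring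
        calc d v = ((G.neighborFinset v ∩ s).card : ℝ) := rfl
          _ = (((G.neighborFinset v ∩ s) ∩ t).card : ℝ)
              + (((G.neighborFinset v ∩ s) \ t).card : ℝ) := by exact_mod_cast hcard
          _ ≤ ((G.neighborFinset v ∩ t).card : ℝ) + ((s \ t).card : ℝ) := by
              rw [h1]
              exact add_le_add_right (by exact_mod_cast h2) _
          _ = ((G.neighborFinset v ∩ t).card : ℝ) + ((s.card : ℝ) - (t.card : ℝ)) := by
              rw [h3]
      have hsum : ∑ v ∈ t, d v ≤ Dt + (t.card : ℝ) * ((s.card : ℝ) - (t.card : ℝ)) := by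
        calc ∑ v ∈ t, d v
            ≤ ∑ v ∈ t, (((G.neighborFinset v ∩ t).card : ℝ) + ((s.card : ℝ) - (t.card : ℝ))) :=
              Finset.sum_le_sum hsplit
          _ = Dt + (t.card : ℝ) * ((s.card : ℝ) - (t.card : ℝ)) := by
              rw [Finset.sum_add_distrib, Finset.sum_const, nsmul_eq_mul]
      have hdu : d u = (t.card : ℝ) := rfl
      calc ∑ v ∈ t, d v ≤ Dt + (t.card : ℝ) * ((s.card : ℝ) - (t.card : ℝ)) := hsum
        _ ≤ (1 - 1 / (r : ℝ)) * (t.card : ℝ) ^ 2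
            + (t.card : ℝ) * ((s.card : ℝ) - (t.card : ℝ)) := by linarith [hDtle]
        _ = (t.card : ℝ) * (s.card : ℝ) - (t.card : ℝ) ^ 2 / r := by
            field_simp
            ring
        _ = d u * s.card - d u ^ 2 / r := by rw [hdu]
    -- double counting
    have hdc : ∑ u ∈ s, ∑ v ∈ G.neighborFinset u ∩ s, d v = ∑ v ∈ s, d v ^ 2 := by
      rw [sum_over_nbrs G s d]
      refine Finset.sum_congr rfl fun v hv => ?_
      rw [sq]
    set X : ℝ := ∑ v ∈ s, d v ^ 2 with hX
    set D : ℝ := ∑ v ∈ s, d v with hD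
    have hXD : X ≤ (s.card : ℝ) * D - X / r := by
      have := Finset.sum_le_sum hmain
      rw [hdc] at this
      calc X ≤ ∑ u ∈ s, (d u * (s.card : ℝ) - d u ^ 2 / r) := this
        _ = (s.card : ℝ) * D - X / r := by
            rw [Finset.sum_sub_distrib, ← Finset.sum_mul, ← Finset.sum_div]
            ring
    have hXnn : 0 ≤ X := Finset.sum_nonneg fun v _ => by positivity
    have hDnn : 0 ≤ D := Finset.sum_nonneg fun v _ => by positivity
    -- conclude
    have hgoal : X ≤ (1 - 1 / ((r : ℝ) + 1)) * D * s.card := by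
      have h1 : (1 - 1 / ((r : ℝ) + 1)) = (r : ℝ) / ((r : ℝ) + 1) := by
        field_simp
        ring
      rw [h1]
      rw [div_mul_eq_mul_div, div_mul_eq_mul_div, le_div_iff₀ (by positivity)]
      have h2 : (r : ℝ) * X ≤ (r : ℝ) * ((s.card : ℝ) * D - X / r) :=
        mul_le_mul_of_nonneg_left hXD (le_of_lt hrpos)
      have h3 : (r : ℝ) * (X / r) = X := by field_simp
      nlinarith [h2, h3]
    have hcast : ((r + 1 : ℕ) : ℝ) = (r : ℝ) + 1 := by push_cast; ring
    rw [hcast]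
    exact hgoal

/-- Nikiforov–Rousseau: if `G` is `K_{r+1}`-free on `n` vertices with `m` edges,
then `∑_v d(v)² ≤ 2 (1 − 1/r) m n`. -/
theorem sum_sq_degrees_le_of_cliqueFree {V : Type*} [Fintype V] [DecidableEq V]
    (G : SimpleGraph V) [DecidableRel G.Adj] (r : ℕ) (hr : 1 ≤ r)
    (hfree : G.CliqueFree (r + 1)) :
    ∑ v, (G.degree v : ℝ) ^ 2 ≤
      2 * (1 - 1 / (r : ℝ)) * (G.edgeFinset.card : ℝ) * (Fintype.card V : ℝ) := by
  have hkey := key_lemma G r hr Finset.univ (fun t _ => hfree t)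
  have huniv : ∀ v : V, G.neighborFinset v ∩ Finset.univ = G.neighborFinset v := by
    intro v; exact Finset.inter_univ _
  simp_rw [huniv, ← SimpleGraph.card_neighborFinset_eq_degree] at *
  have hsum : ∑ v, ((G.neighborFinset v).card : ℝ) = 2 * (G.edgeFinset.card : ℝ) := by
    have := G.sum_degrees_eq_twice_card_edges
    simp_rw [← SimpleGraph.card_neighborFinset_eq_degree] at this
    exact_mod_cast this
  rw [hsum] at hkey
  calc ∑ v, ((G.neighborFinset v).card : ℝ) ^ 2
      ≤ (1 - 1 / (r : ℝ)) * (2 * (G.edgeFinset.card : ℝ)) * (Finset.univ.card : ℝ) := hkey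
    _ = 2 * (1 - 1 / (r : ℝ)) * (G.edgeFinset.card : ℝ) * (Fintype.card V : ℝ) := by
        rw [Finset.card_univ]
        ring
end

section
/- For any simple graph G on n vertices with m edges, the adjacency spectral radius satisfies λ(G)² ≥ (1/n)·∑_{v ∈ V(G)} d(v)² (Hofmeister's inequality). -/
open SimpleGraph Finset Matrix

open scoped RealInnerProductSpace

/-- Hofmeister's inequality: `λ(G)² ≥ (1/n) ∑_v d(v)²`. -/
theorem hofmeister {V : Type*} [Fintype V] [DecidableEq V]
    (G : SimpleGraph V) [DecidableRel G.Adj] (hn : 1 ≤ Fintype.card V) (lam : ℝ)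
    (hlam : IsGreatest (spectrum ℝ (G.adjMatrix ℝ)) lam) :
    (1 / (Fintype.card V : ℝ)) * ∑ v, (G.degree v : ℝ) ^ 2 ≤ lam ^ 2 := by
  classical
  set A := G.adjMatrix ℝ with hAdef
  have hA : A.IsHermitian := by
    rw [Matrix.IsHermitian, conjTranspose_eq_transpose_of_trivial]
    exact G.isSymm_adjMatrix
  set B := hA.eigenvectorBasis with hB
  set μ := hA.eigenvalues with hμ
  set T := Matrix.toEuclideanLin A with hT
  have hTB : ∀ i, T (B i) = μ i • B i := by
    intro i
    have := hA.mulVec_eigenvectorBasis i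
    apply (WithLp.equiv 2 (V → ℝ)).injective
    ext j
    exact congrFun this j
  have hcoord : ∀ (x : EuclideanSpace ℝ V) (i : V), ⟪B i, T x⟫ = μ i * ⟪B i, x⟫ := by
    intro x i
    have hsym := (Matrix.isHermitian_iff_isSymmetric.1 hA)
    rw [← hsym (B i) x, hTB, inner_smul_left]
    simp
  -- Parseval
  have hpars : ∀ x y : EuclideanSpace ℝ V, ∑ i, ⟪B i, x⟫ * ⟪B i, y⟫ = ⟪x, y⟫ := by
    intro x y
    rw [← B.sum_inner_mul_inner x y]
    apply Finset.sum_congr rfl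
    intro i _
    rw [real_inner_comm (B i) x]
  have hmu_le : ∀ i, μ i ≤ lam := fun i =>
    hlam.2 (hA.eigenvalues_mem_spectrum_real i)
  -- Rayleigh upper bound
  have hray : ∀ x : EuclideanSpace ℝ V, ⟪x, T x⟫ ≤ lam * ⟪x, x⟫ := by
    intro x
    rw [← hpars x (T x), ← hpars x x]
    rw [Finset.mul_sum]
    apply Finset.sum_le_sum
    intro i _
    rw [hcoord x i]
    have : ⟪B i, x⟫ * (μ i * ⟪B i, x⟫) = μ i * (⟪B i, x⟫ * ⟪B i, x⟫) := by ring
    rw [this]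
    exact mul_le_mul_of_nonneg_right (hmu_le i) (mul_self_nonneg _)
  -- entries of A are nonneg
  have hAnn : ∀ j k, 0 ≤ A j k := by
    intro j k
    simp only [hAdef, SimpleGraph.adjMatrix_apply]
    positivity
  -- inner in terms of mulVec
  have hinnT : ∀ x : EuclideanSpace ℝ V, ⟪x, T x⟫ =
      ∑ j, ∑ k, x j * (A j k * x k) := by
    intro x
    rw [PiLp.inner_apply]
    apply Finset.sum_congr rfl
    intro j _
    simp only [RCLike.inner_apply, conj_trivial]
    have : (T x) j = ∑ k, A j k * x k := rfl
    rw [this, mul_comm, Finset.mul_sum]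
  -- |μ i| ≤ lam
  have habs : ∀ i, -lam ≤ μ i := by
    intro i
    set v := B i with hv
    set w : EuclideanSpace ℝ V := (WithLp.equiv 2 (V → ℝ)).symm (fun j => |v j|) with hw
    have hwj : ∀ j, w j = |v j| := fun j => rfl
    have hvv : ⟪v, v⟫ = 1 := by
      have hnv := B.orthonormal.1 i
      rw [real_inner_self_eq_norm_mul_norm, hnv, mul_one]
    have hww : ⟪w, w⟫ = 1 := by
      rw [PiLp.inner_apply] at hvv ⊢
      simp only [RCLike.inner_apply, conj_trivial, hwj] at *
      calc ∑ j, |v j| * |v j| = ∑ j, v j * v j := by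
            apply Finset.sum_congr rfl; intro j _; rw [abs_mul_abs_self]
        _ = 1 := hvv
    have hμv : μ i = ⟪v, T v⟫ := by
      rw [hTB i, inner_smul_right, hvv, mul_one]
    have key : -μ i ≤ ⟪w, T w⟫ := by
      rw [hμv, hinnT, hinnT, ← Finset.sum_neg_distrib]
      apply Finset.sum_le_sum
      intro j _
      rw [← Finset.sum_neg_distrib]
      apply Finset.sum_le_sum
      intro k _
      calc -(v j * (A j k * v k)) ≤ |v j * (A j k * v k)| := neg_le_abs _
        _ = |v j| * (A j k * |v k|) := by
            rw [abs_mul, abs_mul, abs_of_nonneg (hAnn j k)]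
        _ = w j * (A j k * w k) := by rw [hwj, hwj]
    have := hray w
    rw [hww, mul_one] at this
    linarith [key]
  have hmusq : ∀ i, μ i ^ 2 ≤ lam ^ 2 := by
    intro i
    exact sq_le_sq' (habs i) (hmu_le i)
  -- the all-ones vector
  set x : EuclideanSpace ℝ V := (WithLp.equiv 2 (V → ℝ)).symm (fun _ => (1:ℝ)) with hx
  have hxj : ∀ j, x j = 1 := fun j => rfl
  have hxx : ⟪x, x⟫ = (Fintype.card V : ℝ) := by
    rw [PiLp.inner_apply]
    simp [hxj]
  have hTxj : ∀ j, (T x) j = (G.degree j : ℝ) := by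
    intro j
    have : (T x) j = (A *ᵥ (fun _ => (1:ℝ))) j := rfl
    rw [this, hAdef]
    simp
  have hdeg : ⟪T x, T x⟫ = ∑ v, (G.degree v : ℝ) ^ 2 := by
    rw [PiLp.inner_apply]
    apply Finset.sum_congr rfl
    intro j _
    simp [hTxj j, sq]
  have hmain : ∑ v, (G.degree v : ℝ) ^ 2 ≤ lam ^ 2 * (Fintype.card V : ℝ) := by
    rw [← hdeg, ← hpars (T x) (T x), ← hxx, ← hpars x x, Finset.mul_sum]
    apply Finset.sum_le_sum
    intro i _
    rw [hcoord x i]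
    have h1 : μ i * ⟪B i, x⟫ * (μ i * ⟪B i, x⟫) = μ i ^ 2 * (⟪B i, x⟫ * ⟪B i, x⟫) := by ring
    rw [h1]
    exact mul_le_mul_of_nonneg_right (hmusq i) (mul_self_nonneg _)
  have hnpos : (0:ℝ) < (Fintype.card V : ℝ) := by exact_mod_cast hn
  rw [div_mul_eq_mul_div, one_mul, div_le_iff₀ hnpos]
  linarith [hmain]
end

section
/- For every n and r ≥ 1, (n/4)·q(T_{n,r}) < e(T_{n,r}) + 1, where q(T_{n,r}) is the signless Laplacian spectral radius of the Turán graph T_{n,r}. Consequently, if G is an n-vertex graph with q(G) ≤ q(T_{n,r}), then e(G) ≤ e(T_{n,r}). -/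
open SimpleGraph Finset Matrix

lemma spec_exists_eigvec {n : ℕ} (M : Matrix (Fin n) (Fin n) ℝ) {μ : ℝ}
    (hμ : μ ∈ spectrum ℝ M) : ∃ v : Fin n → ℝ, v ≠ 0 ∧ M *ᵥ v = μ • v := by
  rw [spectrum.mem_iff] at hμ
  rw [Matrix.isUnit_iff_isUnit_det, isUnit_iff_ne_zero, not_not,
    ← Matrix.exists_mulVec_eq_zero_iff] at hμ
  obtain ⟨v, hv0, hv⟩ := hμ
  refine ⟨v, hv0, ?_⟩
  have h2 : (algebraMap ℝ (Matrix (Fin n) (Fin n) ℝ) μ) *ᵥ v = M *ᵥ v := by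
    rw [← sub_eq_zero, ← Matrix.sub_mulVec, hv]
  rw [← h2, Matrix.algebraMap_eq_diagonal]
  ext i
  simp [Matrix.mulVec_diagonal]

lemma spec_le_of_rowsum {n : ℕ} (M : Matrix (Fin n) (Fin n) ℝ) (hM : ∀ i j, 0 ≤ M i j)
    (w : Fin n → ℝ) (hw : ∀ i, 0 < w i) (c : ℝ) (hc : ∀ i, ∑ j, M i j * w j ≤ c * w i)
    {μ : ℝ} (hμ : μ ∈ spectrum ℝ M) : μ ≤ c := by
  obtain ⟨v, hv0, hv⟩ := spec_exists_eigvec M hμ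
  have hne : (Finset.univ : Finset (Fin n)).Nonempty := by
    rcases isEmpty_or_nonempty (Fin n) with h | h
    · exact absurd (Subsingleton.elim v 0) hv0
    · exact Finset.univ_nonempty
  obtain ⟨i0, -, hi0⟩ := Finset.exists_max_image Finset.univ (fun i => |v i| / w i) hne
  set q : ℝ := |v i0| / w i0 with hq
  have hqn : 0 ≤ q := div_nonneg (abs_nonneg _) (hw i0).le
  have hkey : ∀ j, |v j| ≤ q * w j := by
    intro j
    have := hi0 j (Finset.mem_univ j)
    calc |v j| = (|v j| / w j) * w j := (div_mul_cancel₀ _ (hw j).ne').symm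
    _ ≤ q * w j := by apply mul_le_mul_of_nonneg_right this (hw j).le
  have hvi0 : 0 < |v i0| := by
    rcases (abs_nonneg (v i0)).lt_or_eq with h | h
    · exact h
    · exfalso; apply hv0; ext j
      have h1 := hkey j
      rw [hq, ← h, zero_div, zero_mul] at h1
      exact abs_nonpos_iff.mp h1
  have hqw : q * w i0 = |v i0| := div_mul_cancel₀ _ (hw i0).ne'
  have hstep : |μ| * |v i0| ≤ c * |v i0| := by
    have e1 : μ * v i0 = (M *ᵥ v) i0 := by rw [hv]; rfl
    calc |μ| * |v i0| = |μ * v i0| := (abs_mul μ (v i0)).symm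
    _ = |∑ j, M i0 j * v j| := by rw [e1]; rfl
    _ ≤ ∑ j, |M i0 j * v j| := Finset.abs_sum_le_sum_abs _ _
    _ ≤ ∑ j, M i0 j * (q * w j) := by
        apply Finset.sum_le_sum
        intro j _
        rw [abs_mul, abs_of_nonneg (hM i0 j)]
        exact mul_le_mul_of_nonneg_left (hkey j) (hM i0 j)
    _ = q * ∑ j, M i0 j * w j := by rw [Finset.mul_sum]; congr 1; ext j; ring
    _ ≤ q * (c * w i0) := mul_le_mul_of_nonneg_left (hc i0) hqn
    _ = c * |v i0| := by rw [← hqw]; ring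
  have := le_of_mul_le_mul_right (by linarith [hstep] : |μ| * |v i0| ≤ c * |v i0|) hvi0
  exact (le_abs_self μ).trans this

lemma rayleigh_le_spec_max {n : ℕ} {M : Matrix (Fin n) (Fin n) ℝ} (hM : M.IsHermitian)
    {q : ℝ} (hq : IsGreatest (spectrum ℝ M) q) (x : Fin n → ℝ) :
    x ⬝ᵥ (M *ᵥ x) ≤ q * (x ⬝ᵥ x) := by
  classical
  set U : Matrix (Fin n) (Fin n) ℝ := (hM.eigenvectorUnitary : Matrix (Fin n) (Fin n) ℝ) with hU
  have hUU : U * star U = 1 := (Matrix.mem_unitaryGroup_iff).mp hM.eigenvectorUnitary.2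
  have hU2 : Uᵀ = star U :=
    ((Matrix.star_eq_conjTranspose U).trans (Matrix.conjTranspose_eq_transpose_of_trivial U)).symm
  set y : Fin n → ℝ := (star U) *ᵥ x with hy
  have hlam : ∀ i, hM.eigenvalues i ≤ q := fun i => hq.2 (hM.eigenvalues_mem_spectrum_real i)
  have hdiag : M = U * Matrix.diagonal hM.eigenvalues * star U := by
    have h := hM.spectral_theorem
    simpa using h
  have hyy : y ⬝ᵥ y = x ⬝ᵥ x := by
    have hsU : (star U)ᵀ = U := by rw [← hU2, Matrix.transpose_transpose]
    rw [hy, Matrix.dotProduct_mulVec, ← Matrix.mulVec_transpose, hsU, Matrix.mulVec_mulVec,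
      hUU, Matrix.one_mulVec]
  have hxMx : x ⬝ᵥ (M *ᵥ x) = y ⬝ᵥ (Matrix.diagonal hM.eigenvalues *ᵥ y) := by
    have h0 := congrArg (fun A : Matrix (Fin n) (Fin n) ℝ => x ⬝ᵥ (A *ᵥ x)) hdiag
    rw [h0, ← Matrix.mulVec_mulVec, ← Matrix.mulVec_mulVec, Matrix.dotProduct_mulVec x U,
      ← Matrix.mulVec_transpose, hU2, hy]
  rw [hxMx, ← hyy]
  have h3 : y ⬝ᵥ (Matrix.diagonal hM.eigenvalues *ᵥ y) = ∑ i, hM.eigenvalues i * (y i)^2 := by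
    simp only [dotProduct, Matrix.mulVec_diagonal]
    congr 1; ext i; ring
  have h2 : y ⬝ᵥ y = ∑ i, (y i)^2 := by
    simp only [dotProduct]; congr 1; ext i; ring
  rw [h3, h2, Finset.mul_sum]
  exact Finset.sum_le_sum fun i _ => mul_le_mul_of_nonneg_right (hlam i) (sq_nonneg _)

lemma sLap_rowsum {V : Type*} [Fintype V] [DecidableEq V]
    (G : SimpleGraph V) [DecidableRel G.Adj] (w : V → ℝ) (v : V) :
    ∑ j, signlessLaplacian G v j * w j
      = (G.degree v : ℝ) * w v + ∑ j ∈ G.neighborFinset v, w j := by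
  simp only [signlessLaplacian, Matrix.add_apply, add_mul, Finset.sum_add_distrib]
  congr 1
  · simp only [Matrix.diagonal_apply, ite_mul, zero_mul]
    rw [Finset.sum_ite_eq]
    simp
  · have : ∑ j, G.adjMatrix ℝ v j * w j = (G.adjMatrix ℝ *ᵥ w) v := rfl
    rw [this, SimpleGraph.adjMatrix_mulVec_apply]

lemma sLap_nonneg {V : Type*} [Fintype V] [DecidableEq V]
    (G : SimpleGraph V) [DecidableRel G.Adj] (i j : V) : 0 ≤ signlessLaplacian G i j := by
  simp only [signlessLaplacian, Matrix.add_apply]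
  apply add_nonneg
  · rw [Matrix.diagonal_apply]; positivity
  · by_cases h : G.Adj i j <;> simp [h]

lemma sLap_isHermitian {V : Type*} [Fintype V] [DecidableEq V]
    (G : SimpleGraph V) [DecidableRel G.Adj] : (signlessLaplacian G).IsHermitian := by
  rw [Matrix.IsHermitian, Matrix.conjTranspose_eq_transpose_of_trivial]
  unfold signlessLaplacian
  rw [Matrix.transpose_add, Matrix.diagonal_transpose, SimpleGraph.transpose_adjMatrix]

lemma sLap_rayleigh_ones {n : ℕ} (G : SimpleGraph (Fin n)) [DecidableRel G.Adj]
    {q : ℝ} (hq : IsGreatest (spectrum ℝ (signlessLaplacian G)) q) :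
    4 * (G.edgeFinset.card : ℝ) ≤ q * n := by
  have hray := rayleigh_le_spec_max (sLap_isHermitian G) hq (fun _ => (1:ℝ))
  have h1 : (fun _ => (1:ℝ)) ⬝ᵥ (signlessLaplacian G *ᵥ fun _ => (1:ℝ))
      = ∑ v : Fin n, ∑ j, signlessLaplacian G v j * 1 := by
    simp [dotProduct, Matrix.mulVec, dotProduct]
  have h2 : ∑ v : Fin n, ∑ j, signlessLaplacian G v j * 1
      = ∑ v : Fin n, 2 * (G.degree v : ℝ) := by
    apply Finset.sum_congr rfl
    intro v _
    rw [sLap_rowsum G (fun _ => 1) v]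
    simp [SimpleGraph.card_neighborFinset_eq_degree]
    ring
  have h3 : ∑ v : Fin n, 2 * (G.degree v : ℝ) = 4 * (G.edgeFinset.card : ℝ) := by
    rw [← Finset.mul_sum]
    have := G.sum_degrees_eq_twice_card_edges
    have hc : (∑ v : Fin n, (G.degree v : ℝ)) = ((∑ v, G.degree v : ℕ) : ℝ) := by
      push_cast; ring
    rw [hc, this]
    push_cast; ring
  have h4 : (fun _ => (1:ℝ)) ⬝ᵥ (fun _ : Fin n => (1:ℝ)) = (n : ℝ) := by
    simp [dotProduct]
  rw [h1, h2, h3, h4] at hray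
  linarith

lemma arith_weights (n s m : ℝ) (hn : 1 ≤ n) (hm : 0 ≤ m) (hmn : m ≤ n) :
    ∃ t : ℝ, 0 < t ∧
      (n - 2*s - 2 + m + (n - m)*t ≤ (2*(n^2 - n*s - m) + 2)/n) ∧
      ((2*n - 2*s - m)*t + m ≤ ((2*(n^2 - n*s - m) + 2)/n) * t) := by
  have hn0 : (0:ℝ) < n := by linarith
  set C : ℝ := (2*(n^2 - n*s - m) + 2)/n with hC
  set D : ℝ := m*(n-2)+2 with hD
  have hD0 : 0 < D := by nlinarith [sq_nonneg (m-1), mul_nonneg hm (sub_nonneg.2 hmn)]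
  set L : ℝ := m*n/D with hL
  have hL0 : 0 ≤ L := div_nonneg (mul_nonneg hm hn0.le) hD0.le
  have hCq : C - (2*n - 2*s - m) = D/n := by
    rw [hC, hD]; field_simp; ring
  -- ineq2 holds for any t ≥ L, t > 0
  have ineq2 : ∀ t : ℝ, 0 < t → L ≤ t → (2*n - 2*s - m)*t + m ≤ C * t := by
    intro t ht hLt
    have h1 : (D/n) * L = m := by rw [hL]; field_simp
    have h2 : (D/n) * L ≤ (D/n) * t :=
      mul_le_mul_of_nonneg_left hLt (div_nonneg hD0.le hn0.le)
    nlinarith [hCq]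
  rcases eq_or_lt_of_le (sub_nonneg.2 hmn) with hu | hu
  · -- m = n
    refine ⟨L + 1, by linarith, ?_, ineq2 _ (by linarith) (by linarith)⟩
    have hmn' : m = n := by linarith
    have h0 : n - m = 0 := hu.symm
    rw [hC, le_div_iff₀ hn0, h0, zero_mul, add_zero]
    nlinarith [hmn']
  · -- n - m > 0
    set R : ℝ := (n*(n-m) + 2*(n-m) + 2)/(n*(n-m)) with hR
    have hden : 0 < n*(n-m) := mul_pos hn0 hu
    have hR0 : 0 < R := div_pos (by nlinarith) hden
    have hLR : L ≤ R := by
      rw [hL, hR, div_le_div_iff₀ hD0 hden]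
      nlinarith [sq_nonneg (m - (n - m) - 1), mul_nonneg hm (sub_nonneg.2 hmn)]
    refine ⟨(L + R)/2, by linarith, ?_, ineq2 _ (by linarith) (by linarith)⟩
    have ht2 : (L + R)/2 ≤ R := by linarith
    have hkey : (n - m) * R = (n*(n-m) + 2*(n-m) + 2)/n := by
      rw [hR]; field_simp
    have h3 : (n - m) * ((L+R)/2) ≤ (n - m) * R :=
      mul_le_mul_of_nonneg_left ht2 hu.le
    rw [hC, le_div_iff₀ hn0]
    rw [hkey] at h3
    have h4 : (n - m) * ((L+R)/2) * n ≤ (n*(n-m) + 2*(n-m) + 2) := by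
      calc (n - m) * ((L+R)/2) * n ≤ ((n*(n-m) + 2*(n-m) + 2)/n) * n := by
            apply mul_le_mul_of_nonneg_right h3 hn0.le
      _ = n*(n-m) + 2*(n-m) + 2 := by field_simp
    nlinarith [h4]

-- counting lemma
lemma card_fin_mod_eq (n r : ℕ) (hr : 0 < r) (a : ℕ) :
    ((Finset.univ : Finset (Fin n)).filter (fun w : Fin n => (w:ℕ) % r = a % r)).card
      = n / r + if a % r < n % r then 1 else 0 := by
  have h1 : ((Finset.univ : Finset (Fin n)).filter (fun w : Fin n => (w:ℕ) % r = a % r)).card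
      = ((Finset.range n).filter (fun w => w % r = a % r)).card := by
    rw [← Nat.Iio_eq_range, ← Fin.map_valEmbedding_univ, Finset.filter_map, Finset.card_map]
    rfl
  rw [h1]
  have h2 := Nat.count_modEq_card n hr a
  rw [Nat.count_eq_card_filter_range] at h2
  have h3 : ((Finset.range n).filter (fun w => w % r = a % r)).card
      = ((Finset.range n).filter (fun w => w ≡ a [MOD r])).card := by
    congr 1
  rw [h3, h2]

section TuranRows
variable (n r : ℕ)

/-- the finset of vertices in the same part as `v` -/
private def part (v : Fin n) : Finset (Fin n) :=
  Finset.univ.filter (fun w : Fin n => (w:ℕ) % r = (v:ℕ) % r)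

lemma turan_neighborFinset (v : Fin n) :
    (turanGraph n r).neighborFinset v
      = Finset.univ.filter (fun w : Fin n => ¬ ((w:ℕ) % r = (v:ℕ) % r)) := by
  ext w
  rw [SimpleGraph.mem_neighborFinset]
  simp [turanGraph, eq_comm]

lemma turan_degree (v : Fin n) :
    (turanGraph n r).degree v = n - (part n r v).card := by
  rw [SimpleGraph.degree, turan_neighborFinset]
  have := Finset.card_filter_add_card_filter_not
    (s := (Finset.univ : Finset (Fin n))) (p := fun w : Fin n => (w:ℕ) % r = (v:ℕ) % r)
  simp only [Finset.card_univ, Fintype.card_fin] at this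
  have hp : (part n r v).card
      = (Finset.univ.filter (fun w : Fin n => (w:ℕ) % r = (v:ℕ) % r)).card := rfl
  omega

end TuranRows


/-- `(n/4) q(T_{n,r}) < e(T_{n,r}) + 1`; consequently any `n`-vertex graph `G` with
`q(G) ≤ q(T_{n,r})` satisfies `e(G) ≤ e(T_{n,r})`. -/
theorem quarter_n_q_turan_lt (n r : ℕ) (hr : 1 ≤ r) (qT : ℝ)
    (hqT : IsGreatest (spectrum ℝ (signlessLaplacian (turanGraph n r))) qT) :
    ((n : ℝ) / 4) * qT < ((turanGraph n r).edgeFinset.card : ℝ) + 1 ∧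
      ∀ (G : SimpleGraph (Fin n)) (_ : DecidableRel G.Adj) (qG : ℝ),
        IsGreatest (spectrum ℝ (signlessLaplacian G)) qG → qG ≤ qT →
          G.edgeFinset.card ≤ (turanGraph n r).edgeFinset.card := by
  rcases Nat.eq_zero_or_pos n with hn0 | hn0
  · subst hn0
    exact absurd (isUnit_of_subsingleton _) (spectrum.mem_iff.mp hqT.1)
  have hn1 : (1:ℝ) ≤ (n:ℝ) := by exact_mod_cast hn0
  have hnR : (0:ℝ) < (n:ℝ) := by linarith
  set s : ℕ := n / r with hs
  set k : ℕ := n % r with hk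
  set c : Fin n → ℕ := fun v => (part n r v).card with hcdef
  have hc : ∀ v : Fin n, c v = s + if (v:ℕ) % r < k then 1 else 0 := by
    intro v
    have h := card_fin_mod_eq n r hr (v : ℕ)
    exact h
  set m : ℕ := (Finset.univ.filter (fun v : Fin n => (v:ℕ) % r < k)).card with hmdef
  have hm_le : m ≤ n := by
    calc m ≤ (Finset.univ : Finset (Fin n)).card := Finset.card_filter_le _ _
    _ = n := by simp
  obtain ⟨t, ht, hineq1, hineq2⟩ := arith_weights (n:ℝ) (s:ℝ) (m:ℝ) hn1
    (by positivity) (by exact_mod_cast hm_le)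
  set C : ℝ := (2*((n:ℝ)^2 - (n:ℝ)*(s:ℝ) - (m:ℝ)) + 2)/(n:ℝ) with hC
  set w : Fin n → ℝ := fun v => if (v:ℕ) % r < k then 1 else t with hwdef
  have hw_pos : ∀ v, 0 < w v := by
    intro v; rw [hwdef]; dsimp only; split
    · exact one_pos
    · exact ht
  have hW : ∑ j, w j = (m:ℝ) + ((n:ℝ) - (m:ℝ)) * t := by
    rw [hwdef]
    rw [Finset.sum_ite]
    simp only [Finset.sum_const, nsmul_eq_mul, mul_one]
    have hcard2 : (Finset.univ.filter (fun v : Fin n => ¬ ((v:ℕ) % r < k))).card = n - m := by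
      have := Finset.card_filter_add_card_filter_not
        (s := (Finset.univ : Finset (Fin n))) (p := fun v : Fin n => (v:ℕ) % r < k)
      simp only [Finset.card_univ, Fintype.card_fin] at this
      omega
    rw [hcard2]
    rw [Nat.cast_sub hm_le]
  have hcv_le : ∀ v : Fin n, c v ≤ n := by
    intro v
    calc c v ≤ (Finset.univ : Finset (Fin n)).card := Finset.card_filter_le _ _
    _ = n := by simp
  have hE : 2 * (((turanGraph n r).edgeFinset.card : ℕ) : ℝ)
      = (n:ℝ)^2 - (n:ℝ)*(s:ℝ) - (m:ℝ) := by
    have hsum := (turanGraph n r).sum_degrees_eq_twice_card_edges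
    have h1 : (∑ v : Fin n, ((turanGraph n r).degree v : ℝ))
        = 2 * (((turanGraph n r).edgeFinset.card) : ℝ) := by
      exact_mod_cast congrArg (fun x : ℕ => (x:ℝ)) hsum
    have h2 : ∑ v : Fin n, ((turanGraph n r).degree v : ℝ)
        = ∑ v : Fin n, ((n:ℝ) - (c v : ℝ)) := by
      apply Finset.sum_congr rfl
      intro v _
      rw [turan_degree n r v]
      rw [Nat.cast_sub (hcv_le v)]
    have h3 : ∑ v : Fin n, ((n:ℝ) - (c v : ℝ))
        = (n:ℝ)^2 - ((n:ℝ)*(s:ℝ) + (m:ℝ)) := by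
      rw [Finset.sum_sub_distrib]
      congr 1
      · simp [sq]
      · have : ∀ v : Fin n, (c v : ℝ) = (s:ℝ) + (if (v:ℕ) % r < k then (1:ℝ) else 0) := by
          intro v
          rw [hc v]
          push_cast
          split <;> simp
        calc ∑ v : Fin n, (c v : ℝ)
            = ∑ v : Fin n, ((s:ℝ) + (if (v:ℕ) % r < k then (1:ℝ) else 0)) :=
              Finset.sum_congr rfl (fun v _ => this v)
          _ = (n:ℝ)*(s:ℝ) + (m:ℝ) := by
              rw [Finset.sum_add_distrib, Finset.sum_const, Finset.sum_boole]
              simp [hmdef, mul_comm]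
    rw [h2, h3] at h1
    linarith [h1]
  have hrow : ∀ v, ∑ j, signlessLaplacian (turanGraph n r) v j * w j ≤ C * w v := by
    intro v
    rw [sLap_rowsum]
    have hnb : ∑ j ∈ (turanGraph n r).neighborFinset v, w j
        = (∑ j, w j) - ∑ j ∈ part n r v, w j := by
      rw [turan_neighborFinset]
      have := Finset.sum_filter_add_sum_filter_not (Finset.univ : Finset (Fin n))
        (fun u : Fin n => (u:ℕ) % r = (v:ℕ) % r) w
      have hpp : part n r v = Finset.univ.filter (fun u : Fin n => (u:ℕ) % r = (v:ℕ) % r) := rfl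
      rw [hpp]
      linarith [this]
    have hpart : ∑ j ∈ part n r v, w j = (c v : ℝ) * w v := by
      have hcw : ∀ j ∈ part n r v, w j = w v := by
        intro j hj
        have hj' : (j:ℕ) % r = (v:ℕ) % r := by
          simpa [part] using hj
        rw [hwdef]
        dsimp only
        rw [hj']
      rw [Finset.sum_congr rfl hcw, Finset.sum_const, nsmul_eq_mul]
    rw [hnb, hpart, hW]
    have hdeg : ((turanGraph n r).degree v : ℝ) = (n:ℝ) - (c v : ℝ) := by
      rw [turan_degree n r v, Nat.cast_sub (hcv_le v)]
    rw [hdeg]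
    by_cases hbig : (v:ℕ) % r < k
    · have hcv : (c v : ℝ) = (s:ℝ) + 1 := by rw [hc v, if_pos hbig]; push_cast; ring
      have hwv : w v = 1 := by rw [hwdef]; exact if_pos hbig
      rw [hcv, hwv]
      have hgoal : ((n:ℝ) - ((s:ℝ)+1)) * 1 + ((m:ℝ) + ((n:ℝ)-(m:ℝ))*t - ((s:ℝ)+1)*1)
          = (n:ℝ) - 2*(s:ℝ) - 2 + (m:ℝ) + ((n:ℝ) - (m:ℝ))*t := by ring
      rw [hgoal, mul_one]
      exact hineq1
    · have hcv : (c v : ℝ) = (s:ℝ) := by rw [hc v, if_neg hbig]; push_cast; ring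
      have hwv : w v = t := by rw [hwdef]; exact if_neg hbig
      rw [hcv, hwv]
      have hgoal : ((n:ℝ) - (s:ℝ)) * t + ((m:ℝ) + ((n:ℝ)-(m:ℝ))*t - (s:ℝ)*t)
          = (2*(n:ℝ) - 2*(s:ℝ) - (m:ℝ))*t + (m:ℝ) := by ring
      rw [hgoal]
      exact hineq2
  have hqTC : qT ≤ C :=
    spec_le_of_rowsum _ (sLap_nonneg _) w hw_pos C hrow hqT.1
  have hCE : C * (n:ℝ) = 4 * (((turanGraph n r).edgeFinset.card : ℕ) : ℝ) + 2 := by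
    rw [hC, div_mul_cancel₀ _ hnR.ne']
    linarith [hE]
  constructor
  · have h1 : ((n:ℝ)/4) * qT ≤ ((n:ℝ)/4) * C :=
      mul_le_mul_of_nonneg_left hqTC (by positivity)
    have h2 : ((n:ℝ)/4) * C = (((turanGraph n r).edgeFinset.card : ℕ) : ℝ) + 1/2 := by
      have : ((n:ℝ)/4) * C = (C * (n:ℝ))/4 := by ring
      rw [this, hCE]; ring
    rw [h2] at h1
    linarith
  · intro G instG qG hqG hle
    have hray := sLap_rayleigh_ones G hqG
    have h1 : qG * (n:ℝ) ≤ qT * (n:ℝ) := mul_le_mul_of_nonneg_right hle hnR.le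
    have h2 : qT * (n:ℝ) ≤ C * (n:ℝ) := mul_le_mul_of_nonneg_right hqTC hnR.le
    rw [hCE] at h2
    have h3 : (G.edgeFinset.card : ℝ) < ((turanGraph n r).edgeFinset.card : ℝ) + 1 := by
      push_cast at hray h1 h2 ⊢
      linarith
    have h4 : G.edgeFinset.card < (turanGraph n r).edgeFinset.card + 1 := by
      exact_mod_cast h3
    omega
end
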